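/- Let F be a field, θ_0, θ_d, θ*_0, θ*_d, φ_1, φ_d, ϕ_1, ϕ_d ∈ F with θ_0 ≠ θ_d, θ*_0 ≠ θ*_d, all of φ_1, φ_d, ϕ_1, ϕ_d nonzero, and φ_1 ≠ ϕ_1, φ_d ≠ ϕ_d, φ_1 ≠ ϕ_d, φ_d ≠ ϕ_1. Define a_0, a_d, a*_0, a*_d by a_0 = (θ_0 ϕ_1 − θ_d φ_1)/(ϕ_1 − φ_1), a_d = (θ_d ϕ_d − θ_0 φ_d)/(ϕ_d − φ_d), a*_0 = (θ*_0 ϕ_d − θ*_d φ_1)/(ϕ_d − φ_1), a*_d = (θ*_d ϕ_1 − θ*_0 φ_d)/(ϕ_1 − φ_d). Then (a_0 − θ_0)(a_d − θ_d)(a*_0 − θ*_d)(a*_d − θ*_0) = (a_0 − θ_d)(a_d − θ_0)(a*_0 − θ*_0)(a*_d − θ*_d), i.e. the end-entries satisfy the cross-ratio relation ((a_0−θ_0)(a_d−θ_d))/((a_0−θ_d)(a_d−θ_0)) = ((a*_0−θ*_0)(a*_d−θ*_d))/((a*_0−θ*_d)(a*_d−θ*_0)), and all denominators are nonzero. -/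

import Mathlib

theorem stmt3 (F : Type*) [Field F]
    (θ0 θd θs0 θsd φ1 φd ψ1 ψd a0 ad as0 asd : F)
    (h1 : θ0 ≠ θd) (h2 : θs0 ≠ θsd)
    (n1 : φ1 ≠ 0) (n2 : φd ≠ 0) (n3 : ψ1 ≠ 0) (n4 : ψd ≠ 0)
    (h3 : φ1 ≠ ψ1) (h4 : φd ≠ ψd) (h5 : φ1 ≠ ψd) (h6 : φd ≠ ψ1)
    (ha0 : a0 = (θ0 * ψ1 - θd * φ1) / (ψ1 - φ1))
    (had : ad = (θd * ψd - θ0 * φd) / (ψd - φd))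
    (has0 : as0 = (θs0 * ψd - θsd * φ1) / (ψd - φ1))
    (hasd : asd = (θsd * ψ1 - θs0 * φd) / (ψ1 - φd)) :
    (a0 - θ0) * (ad - θd) * (as0 - θsd) * (asd - θs0)
      = (a0 - θd) * (ad - θ0) * (as0 - θs0) * (asd - θsd) ∧
    ((a0 - θ0) * (ad - θd)) / ((a0 - θd) * (ad - θ0))
      = ((as0 - θs0) * (asd - θsd)) / ((as0 - θsd) * (asd - θs0)) ∧
    (a0 - θd) * (ad - θ0) ≠ 0 ∧ (as0 - θsd) * (asd - θs0) ≠ 0 := by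
  have d1 : ψ1 - φ1 ≠ 0 := sub_ne_zero.mpr (Ne.symm h3)
  have d2 : ψd - φd ≠ 0 := sub_ne_zero.mpr (Ne.symm h4)
  have d3 : ψd - φ1 ≠ 0 := sub_ne_zero.mpr (Ne.symm h5)
  have d4 : ψ1 - φd ≠ 0 := sub_ne_zero.mpr (Ne.symm h6)
  have t1 : θ0 - θd ≠ 0 := sub_ne_zero.mpr h1
  have t2 : θs0 - θsd ≠ 0 := sub_ne_zero.mpr h2
  have e1 : a0 - θ0 = (θ0 - θd) * φ1 / (ψ1 - φ1) := by rw [ha0]; field_simp; ring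
  have e2 : a0 - θd = (θ0 - θd) * ψ1 / (ψ1 - φ1) := by rw [ha0]; field_simp; ring
  have e3 : ad - θd = (θd - θ0) * φd / (ψd - φd) := by rw [had]; field_simp; ring
  have e4 : ad - θ0 = (θd - θ0) * ψd / (ψd - φd) := by rw [had]; field_simp; ring
  have e5 : as0 - θs0 = (θs0 - θsd) * φ1 / (ψd - φ1) := by rw [has0]; field_simp; ring
  have e6 : as0 - θsd = (θs0 - θsd) * ψd / (ψd - φ1) := by rw [has0]; field_simp; ring
  have e7 : asd - θsd = (θsd - θs0) * φd / (ψ1 - φd) := by rw [hasd]; field_simp; ring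
  have e8 : asd - θs0 = (θsd - θs0) * ψ1 / (ψ1 - φd) := by rw [hasd]; field_simp; ring
  have t1' : θd - θ0 ≠ 0 := sub_ne_zero.mpr (Ne.symm h1)
  have t2' : θsd - θs0 ≠ 0 := sub_ne_zero.mpr (Ne.symm h2)
  refine ⟨?_, ?_, ?_, ?_⟩
  · rw [e1, e2, e3, e4, e5, e6, e7, e8]; field_simp
  · rw [e1, e2, e3, e4, e5, e6, e7, e8]; field_simp
  · rw [e2, e4]
    exact mul_ne_zero (div_ne_zero (mul_ne_zero t1 n3) d1)
      (div_ne_zero (mul_ne_zero t1' n4) d2)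
  · rw [e6, e8]
    exact mul_ne_zero (div_ne_zero (mul_ne_zero t2 n4) d3)
      (div_ne_zero (mul_ne_zero t2' n3) d4)
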